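/- Let n ≥ 1, let H: ℝ^{2n} → ℝ be smooth, and let X_H(q,p) = (∂H/∂p (q,p), −∂H/∂q (q,p)) be the canonical Hamiltonian vector field on ℝ^{2n}. Fix h ∈ ℝ, let V ⊆ ℝ^{2n} be open, and suppose y: V → ℝ^{2n} is smooth and satisfies y(x) = x + (h/2)·X_H(y(x)) for every x ∈ V (half-step implicit Euler). Define φ(x) = y(x) + (h/2)·X_H(y(x)) (followed by half-step explicit Euler). Then φ is a symplectic map: for every x ∈ V, Dφ(x)ᵀ · J · Dφ(x) = J, where J is the canonical symplectic 2n×2n matrix with block form J = [[0, −I],[I, 0]] and Dφ(x) is the Jacobian of φ at x. -/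

import Mathlib

open Matrix
open scoped BigOperators

/-- The canonical Hamiltonian vector field `X_H = (∂H/∂p, −∂H/∂q)` on
`ℝ^{2n} = ℝⁿ × ℝⁿ` with coordinates `(q,p)`. -/
noncomputable def hamVF {n : ℕ} (H : (Fin n → ℝ) × (Fin n → ℝ) → ℝ)
    (z : (Fin n → ℝ) × (Fin n → ℝ)) : (Fin n → ℝ) × (Fin n → ℝ) :=
  (fun i => fderiv ℝ H z (0, Pi.single i 1),
   fun i => -fderiv ℝ H z (Pi.single i 1, 0))

/-- Standard basis vectors of `ℝⁿ × ℝⁿ` indexed by `Fin n ⊕ Fin n`. -/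
def basisVec {n : ℕ} : (Fin n ⊕ Fin n) → (Fin n → ℝ) × (Fin n → ℝ)
  | Sum.inl i => (Pi.single i 1, 0)
  | Sum.inr i => (0, Pi.single i 1)

/-- Coordinates of a point of `ℝⁿ × ℝⁿ` indexed by `Fin n ⊕ Fin n`. -/
def coord {n : ℕ} (z : (Fin n → ℝ) × (Fin n → ℝ)) : (Fin n ⊕ Fin n) → ℝ
  | Sum.inl i => z.1 i
  | Sum.inr i => z.2 i

/-- Jacobian matrix of a map `ℝ^{2n} → ℝ^{2n}`. -/
noncomputable def jacP {n : ℕ}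
    (φ : (Fin n → ℝ) × (Fin n → ℝ) → (Fin n → ℝ) × (Fin n → ℝ))
    (x : (Fin n → ℝ) × (Fin n → ℝ)) :
    Matrix (Fin n ⊕ Fin n) (Fin n ⊕ Fin n) ℝ :=
  Matrix.of fun i j => fderiv ℝ (fun z => coord (φ z) i) x (basisVec j)

/-- The canonical symplectic matrix `J = [[0, −I], [I, 0]]`. -/
def sympJ (n : ℕ) : Matrix (Fin n ⊕ Fin n) (Fin n ⊕ Fin n) ℝ :=
  Matrix.fromBlocks 0 (-1) 1 0

/-! ### Auxiliary material -/

/-- `coord · k` as a continuous linear map. -/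
noncomputable def coordL {n : ℕ} (k : Fin n ⊕ Fin n) :
    ((Fin n → ℝ) × (Fin n → ℝ)) →L[ℝ] ℝ :=
  match k with
  | Sum.inl i => (ContinuousLinearMap.proj i).comp (ContinuousLinearMap.fst ℝ _ _)
  | Sum.inr i => (ContinuousLinearMap.proj i).comp (ContinuousLinearMap.snd ℝ _ _)

lemma coordL_apply {n : ℕ} (k : Fin n ⊕ Fin n) (z : (Fin n → ℝ) × (Fin n → ℝ)) :
    coordL k z = coord z k := by cases k <;> rfl

lemma coord_basisVec {n : ℕ} (i j : Fin n ⊕ Fin n) :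
    coord (basisVec j) i = (1 : Matrix (Fin n ⊕ Fin n) (Fin n ⊕ Fin n) ℝ) i j := by
  rcases i with i | i <;> rcases j with j | j <;>
    simp [coord, basisVec, Matrix.one_apply, Pi.single_apply, eq_comm]

lemma basis_decomp {n : ℕ} (w : (Fin n → ℝ) × (Fin n → ℝ)) :
    w = ∑ k : Fin n ⊕ Fin n, coord w k • basisVec k := by
  have key : ∀ (v : Fin n → ℝ), ∑ i, v i • (Pi.single i 1 : Fin n → ℝ) = v := by
    intro v; funext l
    simp [Finset.sum_apply, Pi.single_apply]
  rw [Fintype.sum_sum_type]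
  refine Prod.ext ?_ ?_ <;>
    simp [basisVec, coord, Prod.fst_sum, Prod.snd_sum, key]

lemma fderiv_coord_apply {n : ℕ}
    {φ : (Fin n → ℝ) × (Fin n → ℝ) → (Fin n → ℝ) × (Fin n → ℝ)}
    {x : (Fin n → ℝ) × (Fin n → ℝ)} (hφ : DifferentiableAt ℝ φ x)
    (i : Fin n ⊕ Fin n) (v : (Fin n → ℝ) × (Fin n → ℝ)) :
    fderiv ℝ (fun z => coord (φ z) i) x v = coord (fderiv ℝ φ x v) i := by
  have h1 : (fun z => coord (φ z) i) = fun z => coordL i (φ z) := by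
    funext z; rw [coordL_apply]
  have h2 : HasFDerivAt (fun z => coordL i (φ z))
      ((coordL i).comp (fderiv ℝ φ x)) x :=
    (coordL i).hasFDerivAt.comp x hφ.hasFDerivAt
  rw [h1, h2.fderiv]
  simp [coordL_apply]

lemma diffAt_coord {n : ℕ}
    {φ : (Fin n → ℝ) × (Fin n → ℝ) → (Fin n → ℝ) × (Fin n → ℝ)}
    {x : (Fin n → ℝ) × (Fin n → ℝ)} (hφ : DifferentiableAt ℝ φ x)
    (i : Fin n ⊕ Fin n) : DifferentiableAt ℝ (fun z => coord (φ z) i) x := by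
  have h1 : (fun z => coord (φ z) i) = fun z => coordL i (φ z) := by
    funext z; rw [coordL_apply]
  rw [h1]; exact ((coordL i).differentiable.differentiableAt).comp x hφ

lemma jacP_comp {n : ℕ}
    {f g : (Fin n → ℝ) × (Fin n → ℝ) → (Fin n → ℝ) × (Fin n → ℝ)}
    {x : (Fin n → ℝ) × (Fin n → ℝ)}
    (hf : DifferentiableAt ℝ f (g x)) (hg : DifferentiableAt ℝ g x) :
    jacP (fun z => f (g z)) x = jacP f (g x) * jacP g x := by
  ext i j
  have hcomp : DifferentiableAt ℝ (fun z => f (g z)) x := hf.comp x hg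
  have h1 : jacP (fun z => f (g z)) x i j
      = coord (fderiv ℝ f (g x) (fderiv ℝ g x (basisVec j))) i := by
    have h2 : HasFDerivAt (fun z => f (g z))
        ((fderiv ℝ f (g x)).comp (fderiv ℝ g x)) x :=
      hf.hasFDerivAt.comp x hg.hasFDerivAt
    rw [jacP, Matrix.of_apply, fderiv_coord_apply hcomp i, h2.fderiv]
    rfl
  rw [h1]
  set w := fderiv ℝ g x (basisVec j) with hw
  have hdec := basis_decomp w
  rw [Matrix.mul_apply]
  calc coord (fderiv ℝ f (g x) w) i
      = coordL i (fderiv ℝ f (g x) (∑ k, coord w k • basisVec k)) := by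
        rw [← hdec, coordL_apply]
    _ = ∑ k, coord w k * coordL i (fderiv ℝ f (g x) (basisVec k)) := by
        rw [map_sum, map_sum]
        congr 1; funext k
        rw [_root_.map_smul, _root_.map_smul]; simp
    _ = ∑ k, jacP f (g x) i k * jacP g x k j := by
        congr 1; funext k
        rw [coordL_apply, jacP, jacP, Matrix.of_apply, Matrix.of_apply,
          fderiv_coord_apply hf, fderiv_coord_apply hg, mul_comm]

lemma jacP_affine {n : ℕ}
    {f g : (Fin n → ℝ) × (Fin n → ℝ) → (Fin n → ℝ) × (Fin n → ℝ)}
    {x : (Fin n → ℝ) × (Fin n → ℝ)} (c : ℝ)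
    (hf : DifferentiableAt ℝ f x) (hg : DifferentiableAt ℝ g x) :
    jacP (fun z => f z + c • g z) x = jacP f x + c • jacP g x := by
  ext i j
  have h1 : (fun z => coord (f z + c • g z) i)
      = fun z => coord (f z) i + c * coord (g z) i := by
    funext z
    rw [← coordL_apply, ← coordL_apply, ← coordL_apply, map_add,
      _root_.map_smul]; rfl
  rw [jacP, Matrix.of_apply, h1,
    fderiv_fun_add (diffAt_coord hf i) ((diffAt_coord hg i).const_mul c),
    fderiv_const_mul (diffAt_coord hg i) c]
  simp [jacP]

lemma jacP_id {n : ℕ} (x : (Fin n → ℝ) × (Fin n → ℝ)) :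
    jacP (fun z => z) x = 1 := by
  ext i j
  rw [jacP, Matrix.of_apply, fderiv_coord_apply differentiableAt_fun_id i, fderiv_fun_id]
  exact coord_basisVec i j

lemma contDiff_hamVF {n : ℕ} {H : (Fin n → ℝ) × (Fin n → ℝ) → ℝ}
    (hH : ContDiff ℝ (⊤ : ℕ∞) H) : ContDiff ℝ (⊤ : ℕ∞) (hamVF H) := by
  have hf : ContDiff ℝ (⊤ : ℕ∞) (fderiv ℝ H) := hH.fderiv_right (by simp)
  apply ContDiff.prodMk
  · exact contDiff_pi.2 fun i => hf.clm_apply contDiff_const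
  · exact contDiff_pi.2 fun i => (hf.clm_apply contDiff_const).neg

lemma jacP_congr {n : ℕ}
    {f g : (Fin n → ℝ) × (Fin n → ℝ) → (Fin n → ℝ) × (Fin n → ℝ)}
    {x : (Fin n → ℝ) × (Fin n → ℝ)} (hfg : f =ᶠ[nhds x] g) :
    jacP f x = jacP g x := by
  ext i j
  have : (fun z => coord (f z) i) =ᶠ[nhds x] (fun z => coord (g z) i) := by
    filter_upwards [hfg] with z hz
    rw [hz]
  rw [jacP, jacP, Matrix.of_apply, Matrix.of_apply, this.fderiv_eq]

/-- A half-step implicit Euler step followed by a half-step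
explicit Euler step (sharing the intermediate point `y(x)`) for the canonical
Hamiltonian vector field `X_H` is a symplectic map: `Dφ(x)ᵀ·J·Dφ(x) = J`. -/
theorem implicit_explicit_euler_symplectic
    {n : ℕ} (hn : 1 ≤ n)
    (H : (Fin n → ℝ) × (Fin n → ℝ) → ℝ) (hH : ContDiff ℝ (⊤ : ℕ∞) H)
    (h : ℝ) (V : Set ((Fin n → ℝ) × (Fin n → ℝ))) (hV : IsOpen V)
    (y : (Fin n → ℝ) × (Fin n → ℝ) → (Fin n → ℝ) × (Fin n → ℝ))
    (hy : ContDiffOn ℝ (⊤ : ℕ∞) y V)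
    (hyEq : ∀ x ∈ V, y x = x + (h / 2) • hamVF H (y x))
    (φ : (Fin n → ℝ) × (Fin n → ℝ) → (Fin n → ℝ) × (Fin n → ℝ))
    (hφ : ∀ x, φ x = y x + (h / 2) • hamVF H (y x)) :
    ∀ x ∈ V, (jacP φ x)ᵀ * sympJ n * jacP φ x = sympJ n := by
  intro x hx
  have hle : (1 : WithTop ℕ∞) ≤ ((⊤ : ℕ∞) : WithTop ℕ∞) := by exact_mod_cast le_top
  have hXc : ContDiff ℝ (⊤ : ℕ∞) (hamVF H) := contDiff_hamVF hH
  have hyd : DifferentiableAt ℝ y x :=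
    (hy.differentiableOn (by simp)).differentiableAt (hV.mem_nhds hx)
  have hXd : ∀ w, DifferentiableAt ℝ (hamVF H) w := fun w =>
    (hXc.differentiable (by simp)) w
  -- second derivative
  have hfd : ContDiff ℝ (⊤ : ℕ∞) (fderiv ℝ H) := hH.fderiv_right (by simp)
  have hf'' : HasFDerivAt (fderiv ℝ H) (fderiv ℝ (fderiv ℝ H) (y x)) (y x) :=
    ((hfd.differentiable (by simp)) (y x)).hasFDerivAt
  have hsymm : ∀ v w, fderiv ℝ (fderiv ℝ H) (y x) v w
      = fderiv ℝ (fderiv ℝ H) (y x) w v :=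
    second_derivative_symmetric (fun w => ((hH.differentiable (by simp)) w).hasFDerivAt) hf''
  have heval : ∀ (v u : (Fin n → ℝ) × (Fin n → ℝ)),
      fderiv ℝ (fun w => fderiv ℝ H w v) (y x) u
        = fderiv ℝ (fderiv ℝ H) (y x) u v := by
    intro v u
    have h2 : HasFDerivAt (fun w => fderiv ℝ H w v)
        ((ContinuousLinearMap.apply ℝ ℝ v).comp (fderiv ℝ (fderiv ℝ H) (y x))) (y x) :=
      (ContinuousLinearMap.apply ℝ ℝ v).hasFDerivAt.comp (y x) hf''
    rw [h2.fderiv]; rfl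
  set Sm : Matrix (Fin n ⊕ Fin n) (Fin n ⊕ Fin n) ℝ :=
    Matrix.of fun k l => fderiv ℝ (fderiv ℝ H) (y x) (basisVec k) (basisVec l) with hSmdef
  have hSm : Smᵀ = Sm := by
    ext k l; exact hsymm (basisVec l) (basisVec k)
  set J := sympJ n with hJdef
  -- the Jacobian of the vector field
  have hA' : jacP (hamVF H) (y x) = (-J) * Sm := by
    ext i j
    rcases i with i | i
    · have h1 : jacP (hamVF H) (y x) (Sum.inl i) j
          = fderiv ℝ (fun w => fderiv ℝ H w (basisVec (Sum.inr i))) (y x) (basisVec j) := rfl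
      rw [h1, heval, hsymm]
      simp [hJdef, sympJ, Matrix.mul_apply, Fintype.sum_sum_type, Matrix.one_apply, hSmdef]
    · have h1 : jacP (hamVF H) (y x) (Sum.inr i) j
          = fderiv ℝ (fun w => -(fderiv ℝ H w (basisVec (Sum.inl i)))) (y x) (basisVec j) := rfl
      rw [h1, fderiv_fun_neg]
      simp only [ContinuousLinearMap.neg_apply]
      rw [heval, hsymm]
      simp [hJdef, sympJ, Matrix.mul_apply, Fintype.sum_sum_type, Matrix.one_apply, hSmdef]
  -- matrix identities for J
  have hJt : Jᵀ = -J := by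
    ext i j; rcases i with i | i <;> rcases j with j | j <;>
      simp [hJdef, sympJ, Matrix.one_apply, eq_comm]
  have hJJ : J * J = -1 := by
    ext i j; rcases i with i | i <;> rcases j with j | j <;>
      simp [hJdef, sympJ, Matrix.mul_apply, Fintype.sum_sum_type, Matrix.one_apply]
  set c : ℝ := h / 2 with hcdef
  set B := jacP y x with hBdef
  set A : Matrix (Fin n ⊕ Fin n) (Fin n ⊕ Fin n) ℝ := c • ((-J) * Sm) with hAdef
  have hXy_d : DifferentiableAt ℝ (fun w => hamVF H (y w)) x := (hXd (y x)).comp x hyd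
  -- Jacobian of y
  have hBeq : B = 1 + A * B := by
    have hcongr : jacP y x = jacP (fun z => z + c • hamVF H (y z)) x := by
      apply jacP_congr
      filter_upwards [hV.mem_nhds hx] with z hz
      exact hyEq z hz
    have e : jacP (fun z => z + c • hamVF H (y z)) x
        = 1 + c • (jacP (hamVF H) (y x) * jacP y x) := by
      rw [jacP_affine c differentiableAt_fun_id hXy_d, jacP_id,
        jacP_comp (hXd (y x)) hyd]
    show jacP y x = 1 + (c • (-J * Sm)) * jacP y x
    rw [Matrix.smul_mul, ← hA']
    exact hcongr.trans e
  have hB1 : (1 - A) * B = 1 := by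
    rw [Matrix.sub_mul, Matrix.one_mul]
    nth_rewrite 1 [hBeq]
    abel
  -- Jacobian of φ
  have hφJ : jacP φ x = (1 + A) * B := by
    have hφf : φ = fun z => y z + c • hamVF H (y z) := funext hφ
    show jacP φ x = (1 + c • (-J * Sm)) * jacP y x
    rw [Matrix.add_mul, Matrix.one_mul, Matrix.smul_mul, ← hA',
      hφf, jacP_affine c hyd hXy_d, jacP_comp (hXd (y x)) hyd]
  -- key algebraic identity
  have hkey : Aᵀ * J = -(J * A) := by
    have hAt : Aᵀ = c • (Sm * J) := by
      rw [hAdef, Matrix.transpose_smul, Matrix.transpose_mul, Matrix.transpose_neg,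
        hJt, hSm, neg_neg]
    have h1 : Aᵀ * J = -(c • Sm) := by
      rw [hAt, Matrix.smul_mul, Matrix.mul_assoc, hJJ, Matrix.mul_neg, Matrix.mul_one,
        smul_neg]
    have h2 : J * A = c • Sm := by
      rw [hAdef, Matrix.mul_smul, ← Matrix.mul_assoc, Matrix.mul_neg, hJJ, neg_neg,
        Matrix.one_mul]
    rw [h1, h2]
  have hmid : (1 + A)ᵀ * J * (1 + A) = (1 - A)ᵀ * J * (1 - A) := by
    simp only [Matrix.transpose_add, Matrix.transpose_sub, Matrix.transpose_one,
      Matrix.add_mul, Matrix.sub_mul, Matrix.mul_add, Matrix.mul_sub,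
      Matrix.one_mul, Matrix.mul_one, hkey, Matrix.neg_mul, Matrix.mul_neg]
    abel
  calc (jacP φ x)ᵀ * J * jacP φ x
      = Bᵀ * ((1 + A)ᵀ * J * (1 + A)) * B := by
        rw [hφJ, Matrix.transpose_mul]
        simp only [Matrix.mul_assoc]
    _ = Bᵀ * ((1 - A)ᵀ * J * (1 - A)) * B := by rw [hmid]
    _ = ((1 - A) * B)ᵀ * J * ((1 - A) * B) := by
        rw [Matrix.transpose_mul]
        simp only [Matrix.mul_assoc]
    _ = J := by rw [hB1, Matrix.transpose_one, Matrix.one_mul, Matrix.mul_one]
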